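/- Let 1 → N → G → Q → 1 be a central short exact sequence of torsion-free groups (N contained in the center of G). If Q and N both satisfy the uniqueness of roots property, then G also satisfies uniqueness of roots: whenever f^n = g^n in G for some positive integer n, we have f = g. -/

import Mathlib

/-- Torsion-free monoid (the definition `Monoid.IsTorsionFree` of older Mathlib). -/
def Monoid.IsTorsionFree (G : Type*) [Monoid G] : Prop :=
  ∀ g : G, g ≠ 1 → ¬IsOfFinOrder g

/-- A group has uniqueness of roots if equal `n`-th powers (for positive `n`)
imply equal elements. -/
def UniqueRoots (G : Type*) [Group G] : Prop :=
  ∀ f g : G, ∀ n : ℕ, 0 < n → f ^ n = g ^ n → f = g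

/-- For a central short exact sequence `1 → N → G → Q → 1` of torsion-free groups, if `N`
and `Q` have uniqueness of roots, then so does `G`. -/
theorem uniqueRoots_of_central_ses {G Q : Type*} [Group G] [Group Q]
    (p : G →* Q) (hp : Function.Surjective p)
    (hcentral : p.ker ≤ Subgroup.center G)
    (htfN : Monoid.IsTorsionFree ↥p.ker)
    (htfG : Monoid.IsTorsionFree G)
    (htfQ : Monoid.IsTorsionFree Q)
    (hN : UniqueRoots ↥p.ker)
    (hQ : UniqueRoots Q) :
    UniqueRoots G := by
  intro f g n hn hfg
  -- project to Q
  have hpq : p f = p g := by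
    apply hQ _ _ n hn
    rw [← map_pow, ← map_pow, hfg]
  set z : G := g⁻¹ * f with hz
  have hzker : z ∈ p.ker := by
    simp [MonoidHom.mem_ker, hz, hpq]
  have hzc : z ∈ Subgroup.center G := hcentral hzker
  have hcomm : ∀ x : G, Commute z x := fun x =>
    (Subgroup.mem_center_iff.mp hzc x).symm
  have hf : f = g * z := by rw [hz]; group
  have hzn : z ^ n = 1 := by
    have : g ^ n = (g * z) ^ n := by rw [← hf, hfg]
    rw [(hcomm g).symm.mul_pow] at this
    have := mul_left_cancel (a := g ^ n) (by simpa using this.symm)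
    simpa using this
  have : (⟨z, hzker⟩ : p.ker) = 1 := by
    apply hN _ 1 n hn
    ext
    simpa using hzn
  have hz1 : z = 1 := congrArg Subtype.val this
  rw [hf, hz1, mul_one]
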